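/- For all real γ with |γ| ≥ A > 0 and all α > 0, ∑_{n=1}^{N-1} n!·(αe/n)^{n/2}·|γ|^{-n} ≤ (eA/√α)·(1/(√e − 1)), where N = ⌊A²/α⌋ and α ≤ A². -/

import Mathlib

open Real

lemma two_mul_le_log_div {t : ℝ} (h0 : 0 ≤ t) (h1 : t < 1) :
    2 * t ≤ Real.log (1 + t) - Real.log (1 - t) := by
  have h : |t| < 1 := by rwa [abs_of_nonneg h0]
  have hs := Real.hasSum_log_sub_log_of_abs_lt_one h
  have := le_hasSum hs 0 (fun i _ => by positivity)
  simpa using this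

lemma exp_one_le (n : ℕ) (hn : 1 ≤ n) :
    Real.exp 1 ≤ ((n + 1 : ℝ) / n) ^ ((n : ℝ) + 1/2) := by
  have hn' : (1:ℝ) ≤ n := by exact_mod_cast hn
  have hnp : (0:ℝ) < n := by linarith
  set t : ℝ := 1 / (2 * n + 1) with ht
  have ht0 : 0 ≤ t := by positivity
  have ht1 : t < 1 := by
    rw [ht, div_lt_one (by linarith)]; linarith
  have key := two_mul_le_log_div ht0 ht1
  have h1t : 1 + t = (2*n+2)/(2*n+1) := by rw [ht]; field_simp; ring
  have h2t : 1 - t = (2*n)/(2*n+1) := by rw [ht]; field_simp; ring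
  have hlog : Real.log (1 + t) - Real.log (1 - t) = Real.log ((n+1)/n) := by
    rw [h1t, h2t, ← Real.log_div (by positivity) (by positivity)]
    congr 1
    field_simp
  have hb : (0:ℝ) < (n + 1 : ℝ) / n := by positivity
  rw [← Real.exp_log (x := ((n + 1 : ℝ) / n) ^ ((n : ℝ) + 1/2)) (by positivity),
      Real.exp_le_exp, Real.log_rpow hb]
  rw [hlog] at key
  have hmul : 2 * t * ((n:ℝ) + 1/2) ≤ Real.log ((n+1)/n) * ((n:ℝ)+1/2) :=
    mul_le_mul_of_nonneg_right key (by linarith)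
  have h2 : 2 * t * ((n:ℝ) + 1/2) = 1 := by
    rw [ht]; field_simp
  nlinarith [hmul]

lemma factorial_le (n : ℕ) (hn : 1 ≤ n) :
    (n.factorial : ℝ) ≤ Real.exp 1 * Real.sqrt n * ((n : ℝ) / Real.exp 1) ^ n := by
  induction n, hn using Nat.le_induction with
  | base =>
    have h : Real.exp 1 * Real.sqrt 1 * ((1:ℝ) / Real.exp 1) ^ 1 = 1 := by
      rw [Real.sqrt_one]; field_simp
    simpa using h.ge
  | succ n hn ih =>
    have hn' : (1:ℝ) ≤ n := by exact_mod_cast hn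
    have hnp : (0:ℝ) < n := by linarith
    have he : (0:ℝ) < Real.exp 1 := Real.exp_pos 1
    have key := exp_one_le n hn
    have hsq : (((n:ℝ)+1)/n) ^ ((n : ℝ) + 1/2)
        = (((n:ℝ)+1)/n) ^ n * (Real.sqrt ((n:ℝ)+1) / Real.sqrt n) := by
      rw [Real.rpow_add (by positivity), Real.rpow_natCast, ← Real.sqrt_eq_rpow,
        Real.sqrt_div (by positivity)]
    have hsn : Real.sqrt n ≠ 0 := by positivity
    rw [hsq] at key
    have key2 : Real.exp 1 * Real.sqrt n ≤ Real.sqrt ((n:ℝ)+1) * (((n:ℝ)+1)/n)^n := by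
      calc Real.exp 1 * Real.sqrt n
          ≤ (((n:ℝ)+1)/n)^n * (Real.sqrt ((n:ℝ)+1) / Real.sqrt n) * Real.sqrt n :=
            mul_le_mul_of_nonneg_right key (Real.sqrt_nonneg _)
        _ = Real.sqrt ((n:ℝ)+1) * (((n:ℝ)+1)/n)^n := by
            field_simp
    have step : ((n:ℝ) + 1) * (Real.exp 1 * Real.sqrt n * ((n : ℝ) / Real.exp 1) ^ n)
        ≤ Real.exp 1 * Real.sqrt ((n:ℝ)+1) * (((n:ℝ)+1) / Real.exp 1) ^ (n+1) := by
      calc ((n:ℝ) + 1) * (Real.exp 1 * Real.sqrt n * ((n : ℝ) / Real.exp 1) ^ n)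
          = (Real.exp 1 * Real.sqrt n) * (((n:ℝ)/Real.exp 1)^n * ((n:ℝ)+1)) := by ring
        _ ≤ (Real.sqrt ((n:ℝ)+1) * (((n:ℝ)+1)/n)^n) * (((n:ℝ)/Real.exp 1)^n * ((n:ℝ)+1)) :=
            mul_le_mul_of_nonneg_right key2 (by positivity)
        _ = Real.exp 1 * Real.sqrt ((n:ℝ)+1) * (((n:ℝ)+1) / Real.exp 1) ^ (n+1) := by
            have alg : ∀ E : ℝ, E ≠ 0 →
                (Real.sqrt ((n:ℝ)+1) * (((n:ℝ)+1)/n)^n) * (((n:ℝ)/E)^n * ((n:ℝ)+1))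
                  = E * Real.sqrt ((n:ℝ)+1) * (((n:ℝ)+1)/E)^(n+1) := by
              intro E hE
              rw [div_pow, div_pow, div_pow]
              field_simp
              ring
            exact alg _ (Real.exp_ne_zero 1)
    calc ((n+1).factorial : ℝ) = ((n:ℝ)+1) * n.factorial := by
          push_cast [Nat.factorial_succ]; ring
      _ ≤ ((n:ℝ)+1) * (Real.exp 1 * Real.sqrt n * ((n : ℝ) / Real.exp 1) ^ n) :=
          mul_le_mul_of_nonneg_left ih (by positivity)
      _ ≤ _ := by push_cast; exact step

lemma term_le (A α γ : ℝ) (hA : 0 < A) (hα : 0 < α) (hγ : A ≤ |γ|) (n : ℕ)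
    (hn1 : 1 ≤ n) (hnle : (n : ℝ) * α ≤ A ^ 2) :
    (n.factorial : ℝ) * (α * Real.exp 1 / n) ^ ((n : ℝ) / 2) * |γ| ^ (-(n : ℝ))
      ≤ (Real.exp 1 * A / Real.sqrt α) * (Real.exp (-(1:ℝ)/2)) ^ n := by
  have hg : 0 < |γ| := lt_of_lt_of_le hA hγ
  have hn : (0:ℝ) < n := by exact_mod_cast hn1
  have he : (0:ℝ) < Real.exp 1 := Real.exp_pos 1
  have hb0 : (0:ℝ) < α * Real.exp 1 / n := by positivity
  have hrp1 : (α * Real.exp 1 / n) ^ ((n : ℝ) / 2)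
      = (Real.sqrt (α * Real.exp 1 / n)) ^ n := by
    rw [show ((n:ℝ)/2) = (1/2) * n by ring, Real.rpow_mul hb0.le, Real.rpow_natCast,
      ← Real.sqrt_eq_rpow]
  have hrp2 : |γ| ^ (-(n : ℝ)) = (|γ|⁻¹) ^ n := by
    rw [Real.rpow_neg hg.le, Real.rpow_natCast, inv_pow]
  have hcomb : ((n:ℝ)/Real.exp 1) * Real.sqrt (α * Real.exp 1 / n)
      = Real.sqrt ((n:ℝ) * α / Real.exp 1) := by
    rw [← Real.sqrt_sq (by positivity : (0:ℝ) ≤ (n:ℝ)/Real.exp 1),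
      ← Real.sqrt_mul (by positivity)]
    congr 1
    field_simp
  have hA2 : (n:ℝ) * α ≤ |γ| ^ 2 := le_trans hnle (by nlinarith)
  have hbase : ((n:ℝ)/Real.exp 1) * Real.sqrt (α * Real.exp 1 / n) * |γ|⁻¹
      ≤ Real.exp (-(1:ℝ)/2) := by
    rw [hcomb]
    have h1 : Real.sqrt ((n:ℝ) * α / Real.exp 1) ≤ |γ| / Real.sqrt (Real.exp 1) := by
      rw [show |γ| / Real.sqrt (Real.exp 1)
          = Real.sqrt (|γ|^2 / Real.exp 1) by
            rw [Real.sqrt_div (by positivity), Real.sqrt_sq hg.le]]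
      exact Real.sqrt_le_sqrt (by apply div_le_div_of_nonneg_right hA2 he.le)
    calc Real.sqrt ((n:ℝ) * α / Real.exp 1) * |γ|⁻¹
        ≤ (|γ| / Real.sqrt (Real.exp 1)) * |γ|⁻¹ := by
          apply mul_le_mul_of_nonneg_right h1 (by positivity)
      _ = (Real.sqrt (Real.exp 1))⁻¹ := by
          field_simp
      _ = Real.exp (-(1:ℝ)/2) := by
          rw [Real.sqrt_eq_rpow, Real.exp_one_rpow, ← Real.exp_neg]
          norm_num
  have hsqn : Real.sqrt n ≤ A / Real.sqrt α := by
    rw [show A / Real.sqrt α = Real.sqrt (A^2 / α) by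
      rw [Real.sqrt_div (by positivity), Real.sqrt_sq hA.le]]
    exact Real.sqrt_le_sqrt (by rw [le_div_iff₀ hα]; exact hnle)
  calc (n.factorial : ℝ) * (α * Real.exp 1 / n) ^ ((n : ℝ) / 2) * |γ| ^ (-(n : ℝ))
      = (n.factorial : ℝ) * ((Real.sqrt (α * Real.exp 1 / n)) ^ n * (|γ|⁻¹) ^ n) := by
        rw [hrp1, hrp2]; ring
    _ ≤ (Real.exp 1 * Real.sqrt n * ((n : ℝ) / Real.exp 1) ^ n)
          * ((Real.sqrt (α * Real.exp 1 / n)) ^ n * (|γ|⁻¹) ^ n) := by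
        apply mul_le_mul_of_nonneg_right (factorial_le n hn1) (by positivity)
    _ = (Real.exp 1 * Real.sqrt n)
          * (((n:ℝ)/Real.exp 1) * Real.sqrt (α * Real.exp 1 / n) * |γ|⁻¹) ^ n := by
        rw [mul_pow, mul_pow]; ring
    _ ≤ (Real.exp 1 * (A / Real.sqrt α)) * (Real.exp (-(1:ℝ)/2)) ^ n := by
        apply mul_le_mul
        · exact mul_le_mul_of_nonneg_left hsqn he.le
        · exact pow_le_pow_left₀ (by positivity) hbase n
        · positivity
        · positivity
    _ = (Real.exp 1 * A / Real.sqrt α) * (Real.exp (-(1:ℝ)/2)) ^ n := by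
        rw [mul_div_assoc]

theorem derivative_sum_bound (A α γ : ℝ) (hA : 0 < A) (hα : 0 < α) (hαA : α ≤ A ^ 2)
    (hγ : A ≤ |γ|) :
    ∑ n ∈ Finset.Icc 1 (⌊A ^ 2 / α⌋₊ - 1),
        (n.factorial : ℝ) * (α * Real.exp 1 / n) ^ ((n : ℝ) / 2) * |γ| ^ (-(n : ℝ))
      ≤ (Real.exp 1 * A / Real.sqrt α) * (1 / (Real.sqrt (Real.exp 1) - 1)) := by
  set M := ⌊A ^ 2 / α⌋₊ - 1 with hM
  set r := Real.exp (-(1:ℝ)/2) with hr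
  set C := Real.exp 1 * A / Real.sqrt α with hC
  have hr0 : 0 < r := Real.exp_pos _
  have hr1 : r < 1 := by rw [hr, Real.exp_lt_one_iff]; norm_num
  have hC0 : 0 ≤ C := by rw [hC]; positivity
  have hterm : ∀ n ∈ Finset.Icc 1 M, (n.factorial : ℝ) * (α * Real.exp 1 / n) ^ ((n : ℝ) / 2)
      * |γ| ^ (-(n : ℝ)) ≤ C * r ^ n := by
    intro n hn
    rw [Finset.mem_Icc] at hn
    apply term_le A α γ hA hα hγ n hn.1
    have h1 : (n : ℝ) ≤ (⌊A ^ 2 / α⌋₊ : ℝ) := by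
      exact_mod_cast le_trans hn.2 (Nat.sub_le _ _)
    have h2 : (⌊A ^ 2 / α⌋₊ : ℝ) ≤ A ^ 2 / α := Nat.floor_le (by positivity)
    calc (n : ℝ) * α ≤ (A ^ 2 / α) * α := by
          apply mul_le_mul_of_nonneg_right (le_trans h1 h2) hα.le
      _ = A ^ 2 := by field_simp
  have hgeom : ∑ n ∈ Finset.Icc 1 M, r ^ n ≤ r * (1 - r)⁻¹ := by
    have hs : HasSum (fun k : ℕ => r ^ (k + 1)) (r * (1 - r)⁻¹) := by
      have := (hasSum_geometric_of_lt_one hr0.le hr1).mul_left r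
      simpa [pow_succ, mul_comm] using this
    have : ∑ n ∈ Finset.Icc 1 M, r ^ n = ∑ i ∈ Finset.range M, r ^ (i + 1) := by
      rw [← Finset.Ico_add_one_right_eq_Icc, Finset.sum_Ico_eq_sum_range]
      simp [add_comm]
    rw [this]
    exact sum_le_hasSum (Finset.range M) (fun i _ => by positivity) hs
  have hfinal : r * (1 - r)⁻¹ = 1 / (Real.sqrt (Real.exp 1) - 1) := by
    have hse : Real.sqrt (Real.exp 1) = Real.exp (1/2 : ℝ) := by
      rw [Real.sqrt_eq_rpow, Real.exp_one_rpow]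
    have hrse : r * Real.exp (1/2 : ℝ) = 1 := by
      rw [hr, ← Real.exp_add]; norm_num
    have hse1 : 1 < Real.exp (1/2 : ℝ) := by
      rw [Real.one_lt_exp_iff]; norm_num
    rw [hse]
    have h1r : 1 - r > 0 := by linarith
    have h2 : Real.exp (1/2 : ℝ) - 1 > 0 := by linarith
    field_simp
    nlinarith [hrse]
  calc ∑ n ∈ Finset.Icc 1 M,
        (n.factorial : ℝ) * (α * Real.exp 1 / n) ^ ((n : ℝ) / 2) * |γ| ^ (-(n : ℝ))
      ≤ ∑ n ∈ Finset.Icc 1 M, C * r ^ n := Finset.sum_le_sum hterm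
    _ = C * ∑ n ∈ Finset.Icc 1 M, r ^ n := by rw [Finset.mul_sum]
    _ ≤ C * (r * (1 - r)⁻¹) := mul_le_mul_of_nonneg_left hgeom hC0
    _ = C * (1 / (Real.sqrt (Real.exp 1) - 1)) := by rw [hfinal]
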